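/- For every n ≥ 1 and every 0–1 vector v = (v_0,…,v_{n−1}) ∈ {0,1}^n, one has 2^n ≠ 3^{ω(v)}, the rational number x(v) = ρ(v)/(2^n − 3^{ω(v)}) has odd denominator in lowest terms, T^n(x(v)) = x(v), and for each j with 0 ≤ j < n the iterate T^j(x(v)) is odd if v_j = 1 and even if v_j = 0 (existence half of the Böhm–Sontacchi–Lagarias theorem). -/

import Mathlib

/-- The `3x+1` function on rationals: `T x = x/2` if the numerator of `x` is even,
and `T x = (3x+1)/2` if the numerator of `x` is odd. -/
noncomputable def T (x : ℚ) : ℚ := if Even x.num then x / 2 else (3 * x + 1) / 2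

/-- `ω(v) = v_0 + ⋯ + v_{n-1}`. -/
def omegaF {n : ℕ} (v : Fin n → ℕ) : ℕ := ∑ j, v j

/-- `ρ(v) = ∑_{j=0}^{n-1} v_j ⬝ 3^{v_{j+1} + ⋯ + v_{n-1}} ⬝ 2^j`. -/
def rhoF {n : ℕ} (v : Fin n → ℕ) : ℕ :=
  ∑ j : Fin n, v j * 3 ^ (∑ i : Fin n, if (j : ℕ) < (i : ℕ) then v i else 0) * 2 ^ (j : ℕ)

/-- `x(v) = ρ(v) / (2^n - 3^{ω(v)})`. -/
noncomputable def xF {n : ℕ} (v : Fin n → ℕ) : ℚ :=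
  (rhoF v : ℚ) / ((2 : ℚ) ^ n - (3 : ℚ) ^ omegaF v)

/-- Cyclic shift of a vector. -/
def sh {n : ℕ} [NeZero n] (v : Fin n → ℕ) : Fin n → ℕ := fun j => v (j + 1)

lemma omega_sh {n : ℕ} [NeZero n] (v : Fin n → ℕ) : omegaF (sh v) = omegaF v := by
  unfold omegaF sh
  exact Equiv.sum_comp (Equiv.addRight (1 : Fin n)) v

lemma rho_split (m : ℕ) (v : Fin (m+1) → ℕ) :
    rhoF v = v 0 * 3 ^ (∑ i : Fin m, v i.succ)
      + ∑ j : Fin m, v j.succ * 3 ^ (∑ i : Fin m, if (j:ℕ) < (i:ℕ) then v i.succ else 0) * 2 ^ ((j:ℕ)+1) := by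
  have hA0 : (∑ i : Fin (m+1), if (0:ℕ) < (i:ℕ) then v i else 0)
      = ∑ i : Fin m, v i.succ := by
    rw [Fin.sum_univ_succ]
    simp
  have hAsucc : ∀ j : Fin m, (∑ i : Fin (m+1), if (j:ℕ)+1 < (i:ℕ) then v i else 0)
      = ∑ i : Fin m, if (j:ℕ) < (i:ℕ) then v i.succ else 0 := by
    intro j
    rw [Fin.sum_univ_succ]
    simp [Nat.succ_lt_succ_iff]
  unfold rhoF
  rw [Fin.sum_univ_succ]
  simp only [Fin.val_zero, Fin.val_succ, pow_zero, mul_one]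
  erw [hA0]
  congr 1
  exact Finset.sum_congr rfl fun j _ => by rw [hAsucc j]

lemma rho_sh (m : ℕ) (v : Fin (m+1) → ℕ) :
    3 ^ (v 0) * rhoF v + v 0 * 2 ^ (m+1)
      = v 0 * 3 ^ (omegaF v) + 2 * rhoF (sh v) := by
  have hcs1 : ∀ j : Fin m, (j.castSucc + 1 : Fin (m+1)) = j.succ := by
    intro j
    apply Fin.ext
    simp [Fin.add_def, Nat.mod_eq_of_lt (by omega : ((j:ℕ)+1) < m+1)]
  have hlast : (Fin.last m + 1 : Fin (m+1)) = 0 := by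
    apply Fin.ext
    simp [Fin.add_def]
  have hrv := rho_split m v
  have homega : omegaF v = v 0 + ∑ i : Fin m, v i.succ := by
    unfold omegaF; rw [Fin.sum_univ_succ]
  have hB : ∀ j : Fin m, (∑ i : Fin (m+1), if (j:ℕ) < (i:ℕ) then sh v i else 0)
      = v 0 + ∑ i : Fin m, if (j:ℕ) < (i:ℕ) then v i.succ else 0 := by
    intro j
    rw [Fin.sum_univ_castSucc]
    simp only [sh, Fin.coe_castSucc, Fin.val_last, hcs1, hlast]
    rw [if_pos j.isLt, add_comm]
  have hBlast : (∑ i : Fin (m+1), if (m:ℕ) < (i:ℕ) then sh v i else 0) = 0 := by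
    apply Finset.sum_eq_zero
    intro i _
    rw [if_neg]
    exact Nat.not_lt.mpr (Nat.lt_succ_iff.mp i.isLt)
  have hrsh : rhoF (sh v) = (∑ j : Fin m, v j.succ * 3 ^ (v 0 + ∑ i : Fin m, if (j:ℕ) < (i:ℕ) then v i.succ else 0) * 2 ^ (j:ℕ))
      + v 0 * 2 ^ m := by
    unfold rhoF
    rw [Fin.sum_univ_castSucc]
    simp only [Fin.coe_castSucc, Fin.val_last]
    rw [hBlast]
    simp only [pow_zero, mul_one]
    congr 1
    · refine Finset.sum_congr rfl fun j _ => ?_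
      rw [hB j]
      simp only [sh, hcs1]
    · simp only [sh, hlast]
  rw [hrv, homega, hrsh]
  have hsum : 3 ^ v 0 * ∑ j : Fin m, v j.succ * 3 ^ (∑ i : Fin m, if (j:ℕ) < (i:ℕ) then v i.succ else 0) * 2 ^ ((j:ℕ)+1)
      = 2 * ∑ j : Fin m, v j.succ * 3 ^ (v 0 + ∑ i : Fin m, if (j:ℕ) < (i:ℕ) then v i.succ else 0) * 2 ^ (j:ℕ) := by
    rw [Finset.mul_sum, Finset.mul_sum]
    refine Finset.sum_congr rfl fun j _ => ?_
    rw [pow_add, pow_succ]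
    ring
  rw [mul_add, hsum, pow_add, pow_succ]
  ring

lemma rho_parity (m : ℕ) (v : Fin (m+1) → ℕ) : Even (rhoF v) ↔ Even (v 0) := by
  rw [rho_split m v]
  have h2 : 2 ∣ ∑ j : Fin m, v j.succ * 3 ^ (∑ i : Fin m, if (j:ℕ) < (i:ℕ) then v i.succ else 0) * 2 ^ ((j:ℕ)+1) := by
    refine Finset.dvd_sum fun j _ => ?_
    exact dvd_mul_of_dvd_right (dvd_pow_self 2 (Nat.succ_ne_zero _)) _
  obtain ⟨c, hc⟩ := h2
  rw [hc]
  have h3 : Odd (3 ^ (∑ i : Fin m, v i.succ)) := Odd.pow (by decide)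
  rw [Nat.even_add, Nat.even_mul]
  have : ¬ Even (3 ^ (∑ i : Fin m, v i.succ)) := Nat.not_even_iff_odd.mpr h3
  simp [this]

lemma numden (a d : ℤ) (hd : Odd d) :
    Odd ((a : ℚ)/(d : ℚ)).den ∧ (Even ((a:ℚ)/(d:ℚ)).num ↔ Even a) := by
  have hd0 : d ≠ 0 := by rintro rfl; simp [Int.odd_iff] at hd
  have hdq : ((d:ℚ)) ≠ 0 := by exact_mod_cast hd0
  set q : ℚ := (a:ℚ)/(d:ℚ) with hq
  have hden : ((q.den : ℚ)) ≠ 0 := by exact_mod_cast q.den_ne_zero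
  have h1 : (q.num : ℚ) * d = a * q.den := by
    have h0 := Rat.num_div_den q
    rw [hq] at h0
    field_simp at h0
    linarith [h0]
  have h2 : q.num * d = a * (q.den : ℤ) := by exact_mod_cast h1
  have hdvd : q.den ∣ d.natAbs := by
    have hq' : q = Rat.divInt a d := by rw [hq, Rat.divInt_eq_div]
    have h5 := Rat.den_dvd a d
    rw [← hq'] at h5
    exact_mod_cast Int.natAbs_dvd_natAbs.mpr h5
  have hdenodd : Odd q.den := (Int.natAbs_odd.mpr hd).of_dvd_nat hdvd
  refine ⟨hdenodd, ?_⟩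
  have h3 : Even (q.num * d) ↔ Even (a * (q.den:ℤ)) := by rw [h2]
  rw [Int.even_mul, Int.even_mul] at h3
  have hdne : ¬ Even d := Int.not_even_iff_odd.mpr hd
  have hdenne : ¬ Even ((q.den : ℤ)) := by
    rw [Int.even_coe_nat]; exact Nat.not_even_iff_odd.mpr hdenodd
  tauto

lemma two_pow_ne (m k : ℕ) : (2:ℕ) ^ (m+1) ≠ 3 ^ k := by
  intro h
  have h1 : Even ((2:ℕ) ^ (m+1)) := Even.pow_of_ne_zero ⟨1, by norm_num⟩ (Nat.succ_ne_zero m)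
  have h2 : Odd ((3:ℕ) ^ k) := Odd.pow (by decide)
  rw [h] at h1
  exact (Nat.not_even_iff_odd.mpr h2) h1

lemma d_odd (m k : ℕ) : Odd ((2:ℤ) ^ (m+1) - 3 ^ k) := by
  have h1 : Even ((2:ℤ) ^ (m+1)) := Even.pow_of_ne_zero ⟨1, by norm_num⟩ (Nat.succ_ne_zero m)
  have h2 : Odd ((3:ℤ) ^ k) := Odd.pow ⟨1, by norm_num⟩
  exact h1.sub_odd h2

lemma xF_eq (m : ℕ) (v : Fin (m+1) → ℕ) :
    xF v = ((rhoF v : ℤ) : ℚ) / (((2:ℤ) ^ (m+1) - 3 ^ (omegaF v) : ℤ) : ℚ) := by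
  unfold xF
  push_cast
  ring_nf

lemma xF_den_num (m : ℕ) (v : Fin (m+1) → ℕ) :
    Odd (xF v).den ∧ (Even (xF v).num ↔ Even (v 0)) := by
  rw [xF_eq]
  obtain ⟨h1, h2⟩ := numden (rhoF v : ℤ) ((2:ℤ) ^ (m+1) - 3 ^ (omegaF v)) (d_odd m _)
  refine ⟨h1, ?_⟩
  rw [h2, Int.even_coe_nat]
  exact rho_parity m v

lemma D_ne (m : ℕ) (v : Fin (m+1) → ℕ) :
    (2:ℚ) ^ (m+1) - (3:ℚ) ^ (omegaF v) ≠ 0 := by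
  intro h
  apply two_pow_ne m (omegaF v)
  have : (2:ℚ) ^ (m+1) = 3 ^ (omegaF v) := by linarith
  exact_mod_cast this

lemma T_step (m : ℕ) (v : Fin (m+1) → ℕ) (hv01 : ∀ j, v j = 0 ∨ v j = 1) :
    T (xF v) = xF (sh v) := by
  have hD := D_ne m v
  have hkey := rho_sh m v
  have hparity := (xF_den_num m v).2
  have hxsh : xF (sh v) = (rhoF (sh v) : ℚ) / ((2:ℚ) ^ (m+1) - 3 ^ (omegaF v)) := by
    unfold xF
    rw [omega_sh]
  rcases hv01 0 with h0 | h0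
  · have hnum : Even (xF v).num := hparity.mpr (by simp [h0])
    rw [T, if_pos hnum]
    rw [h0] at hkey
    simp only [pow_zero, one_mul, zero_mul, zero_add, mul_zero] at hkey
    have hkeyQ : (rhoF v : ℚ) = 2 * rhoF (sh v) := by exact_mod_cast hkey
    rw [hxsh]
    unfold xF
    rw [hkeyQ]
    field_simp
  · have hnum : ¬ Even (xF v).num := by
      rw [hparity, h0]
      simp [Nat.even_iff]
    rw [T, if_neg hnum]
    rw [h0] at hkey
    simp only [pow_one, one_mul] at hkey
    have hkeyQ : 3 * (rhoF v : ℚ) + 2 ^ (m+1) = 3 ^ (omegaF v) + 2 * rhoF (sh v) := by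
      exact_mod_cast hkey
    rw [hxsh]
    unfold xF
    have key : 3 * (rhoF v : ℚ) + ((2:ℚ) ^ (m+1) - 3 ^ (omegaF v)) = 2 * rhoF (sh v) := by
      linarith [hkeyQ]
    have hρ' : (rhoF (sh v) : ℚ) = (3 * rhoF v + ((2:ℚ)^(m+1) - 3^omegaF v))/2 := by linarith [key]
    rw [hρ']
    field_simp

open Fin.NatCast in
lemma sh_pow (m : ℕ) (k : ℕ) (v : Fin (m+1) → ℕ) (j : Fin (m+1)) :
    sh^[k] v j = v (j + (k : Fin (m+1))) := by
  induction k generalizing v j with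
  | zero => simp
  | succ k ih =>
    rw [Function.iterate_succ_apply, ih (sh v) j]
    show v (j + (k : Fin (m+1)) + 1) = _
    congr 1
    push_cast
    simp [add_assoc]

lemma iter_xF (m : ℕ) (k : ℕ) (v : Fin (m+1) → ℕ) (hv01 : ∀ j, v j = 0 ∨ v j = 1) :
    T^[k] (xF v) = xF (sh^[k] v) := by
  induction k generalizing v with
  | zero => simp
  | succ k ih =>
    rw [Function.iterate_succ_apply, T_step m v hv01, Function.iterate_succ_apply]
    exact ih (sh v) (fun j => hv01 _)

/-- Existence half of the Böhm–Sontacchi–Lagarias theorem: for every `0-1` vector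
`v` of length `n ≥ 1`, `2^n ≠ 3^{ω(v)}`, the rational `x(v) = ρ(v)/(2^n - 3^{ω(v)})`
has odd denominator, is periodic of period `n` under `T`, and its parity sequence
starts with `v`. -/
theorem stmt_3 (n : ℕ) (hn : 1 ≤ n) (v : Fin n → ℕ) (hv01 : ∀ j, v j = 0 ∨ v j = 1) :
    (2 : ℕ) ^ n ≠ 3 ^ omegaF v ∧
    Odd (xF v).den ∧
    T^[n] (xF v) = xF v ∧
    ∀ j : Fin n, (v j = 1 ↔ Odd ((T^[(j : ℕ)] (xF v)).num)) ∧
      (v j = 0 ↔ Even ((T^[(j : ℕ)] (xF v)).num)) := by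
  obtain ⟨m, rfl⟩ : ∃ m, n = m + 1 := ⟨n - 1, by omega⟩
  refine ⟨two_pow_ne m _, (xF_den_num m v).1, ?_, ?_⟩
  · rw [iter_xF m (m+1) v hv01]
    congr 1
    funext j
    rw [sh_pow]
    congr 1
    simp [Fin.natCast_self]
  · intro j
    rw [iter_xF m (j:ℕ) v hv01]
    have hw01 : ∀ i, sh^[(j:ℕ)] v i = 0 ∨ sh^[(j:ℕ)] v i = 1 := fun i => by
      rw [sh_pow]; exact hv01 _
    have hpar := (xF_den_num m (sh^[(j:ℕ)] v)).2
    have hsh0 : sh^[(j:ℕ)] v 0 = v j := by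
      rw [sh_pow]
      congr 1
      simp [Fin.cast_val_eq_self]
    rw [hsh0] at hpar
    constructor
    · constructor
      · intro h1
        rw [← Int.not_even_iff_odd, hpar, h1]
        simp [Nat.even_iff]
      · intro h1
        rcases hv01 j with h | h
        · exfalso
          have : Even ((xF (sh^[(j:ℕ)] v)).num) := hpar.mpr (by simp [h])
          exact (Int.not_even_iff_odd.mpr h1) this
        · exact h
    · constructor
      · intro h1
        exact hpar.mpr (by simp [h1])
      · intro h1
        rcases hv01 j with h | h
        · exact h
        · exfalso
          have := hpar.mp h1
          rw [h] at this
          simp [Nat.even_iff] at this
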